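/- arXiv:1603.09289 — 4 statements merged into one kernel-verified Lean document; each statement's English description precedes it below -/
import Mathlib

section
/- If a sequence of real numbers (r_n) converges to 0 in the classical sense and all but finitely many r_n are strictly positive, then the s-limit of the surreal sign expansions of the r_n is the string +---··· (i.e., one plus followed by ω minuses), which represents the surreal 1/ω. -/
open scoped Classical

noncomputable def slim {L M A : Type*} [LinearOrder L] [LinearOrder M]
    (a : L → M → Option A) : M → Option A := fun m =>
  if h : ∃ l0 : L, ∀ m' ≤ m, ∀ l, l0 ≤ l → ∀ l', l0 ≤ l' →
      a l m' = a l' m' ∧ (a l m').isSome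
  then a h.choose m else none

noncomputable def slimIio {A : Type*} (α : Ordinal) (s : Ordinal → Ordinal → Option A) :
    Ordinal → Option A :=
  slim (L := Set.Iio α) (fun β => s β.1)

abbrev SignStr := Ordinal → Option Bool

def signVal : Option Bool → ℕ
  | none => 1
  | some false => 0
  | some true => 2

def strLT (s t : SignStr) : Prop :=
  ∃ γ, (∀ β < γ, s β = t β) ∧ signVal (s γ) < signVal (t γ)

def strLE (s t : SignStr) : Prop := s = t ∨ strLT s t

noncomputable def ordStr (α : Ordinal) : SignStr := fun γ => if γ < α then some true else none

noncomputable def strLength {A : Type*} (a : Ordinal → Option A) : Ordinal :=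
  sInf {γ | a γ = none}

noncomputable def strAppend {A : Type*} (a b : Ordinal → Option A) : Ordinal → Option A :=
  fun γ => if γ < strLength a then a γ else b (γ - strLength a)

noncomputable def oneOverOmega : SignStr := fun γ =>
  if γ = 0 then some true else if γ < Ordinal.omega0 then some false else none

noncomputable def negOneOverOmega : SignStr := fun γ =>
  if γ = 0 then some false else if γ < Ordinal.omega0 then some true else none

def IsDyadic (x : ℝ) : Prop := ∃ (k : ℤ) (m : ℕ), x = k / 2 ^ m

noncomputable def cand : Option ℝ × Option ℝ → ℝ
  | (none, none) => 0
  | (some l, none) => l + 1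
  | (none, some u) => u - 1
  | (some l, some u) => (l + u) / 2

noncomputable def signState (r : ℝ) : ℕ → Option ℝ × Option ℝ
  | 0 => (none, none)
  | n + 1 =>
      let st := signState r n
      let c := cand st
      if c < r then (some c, st.2)
      else if r < c then (st.1, some c)
      else st

noncomputable def signAt (r : ℝ) (n : ℕ) : Option Bool :=
  let c := cand (signState r n)
  if c < r then some true else if r < c then some false else none

noncomputable def signExp (r : ℝ) : SignStr := fun γ =>
  if h : ∃ n : ℕ, γ = (n : Ordinal) then signAt r h.choose else none


open Filter Topology

lemma signExp_natCast (x : ℝ) (j : ℕ) : signExp x (j : Ordinal) = signAt x j := by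
  unfold signExp
  have h : ∃ n : ℕ, (j : Ordinal) = (n : Ordinal) := ⟨j, rfl⟩
  rw [dif_pos h]
  have hs := h.choose_spec
  rw [Nat.cast_inj] at hs
  rw [← hs]

lemma signState_one (x : ℝ) (hx : 0 < x) : signState x 1 = (some (0:ℝ), none) := by
  simp [signState, cand, hx]

lemma signState_add_two (x : ℝ) (hx : 0 < x) :
    ∀ n : ℕ, x < (1/2)^n → signState x (n+2) = (some (0:ℝ), some ((1/2:ℝ)^n)) := by
  intro n
  induction n with
  | zero =>
    intro h
    rw [pow_zero] at h
    show signState x 2 = _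
    rw [show (2:ℕ) = 1+1 from rfl, signState, signState_one x hx]
    simp [cand, h, not_lt.2 h.le]
  | succ n ih =>
    intro h
    have h' : x < (1/2:ℝ)^n := h.trans_le (by
      apply pow_le_pow_of_le_one (by norm_num) (by norm_num) (Nat.le_succ n))
    rw [show n+1+2 = (n+2)+1 from rfl, signState, ih h']
    have hc : cand (some (0:ℝ), some ((1/2:ℝ)^n)) = (1/2:ℝ)^(n+1) := by
      simp [cand]; ring
    simp only [hc, if_neg (not_lt.2 h.le), if_pos h]

lemma signAt_zero_pos (x : ℝ) (hx : 0 < x) : signAt x 0 = some true := by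
  simp [signAt, signState, cand, hx]

lemma signAt_succ_false (x : ℝ) (hx : 0 < x) (j : ℕ) (h : x < (1/2)^j) :
    signAt x (j+1) = some false := by
  cases j with
  | zero =>
    rw [pow_zero] at h
    simp [signAt, signState_one x hx, cand, h, not_lt.2 h.le]
  | succ n =>
    have h' : x < (1/2:ℝ)^n := h.trans_le
      (pow_le_pow_of_le_one (by norm_num) (by norm_num) (Nat.le_succ n))
    rw [show n+1+1 = n+2 from rfl]
    unfold signAt
    rw [signState_add_two x hx n h']
    have hc : cand (some (0:ℝ), some ((1/2:ℝ)^n)) = (1/2:ℝ)^(n+1) := by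
      simp [cand]; ring
    simp only [hc, if_neg (not_lt.2 h.le), if_pos h]


open Filter Topology in
/-- If a sequence of reals converges to 0 and all but finitely many terms are
strictly positive, then the s-limit of their surreal sign expansions is the string
`+---⋯` (one plus followed by ω minuses), i.e. the sign expansion of `1/ω`. -/
theorem slim_signExp_of_tendsto_zero_of_eventually_pos (r : ℕ → ℝ)
    (hconv : Tendsto r atTop (𝓝 0))
    (hpos : ∀ᶠ n in atTop, 0 < r n) :
    slim (fun n => signExp (r n)) = oneOverOmega := by
  funext γ
  by_cases hγ : γ < Ordinal.omega0
  · obtain ⟨k, rfl⟩ := Ordinal.lt_omega0.mp hγ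
    have hev : ∀ᶠ n in atTop, 0 < r n ∧ r n < (1/2)^k :=
      hpos.and (hconv.eventually_lt_const (by positivity))
    obtain ⟨N, hN⟩ := eventually_atTop.mp hev
    have key : ∀ (j : ℕ), j ≤ k → ∀ n, N ≤ n → signExp (r n) (j:Ordinal) =
        (if j = 0 then some true else some false) := by
      intro j hj n hn
      rw [signExp_natCast]
      obtain ⟨hn1, hn2⟩ := hN n hn
      cases j with
      | zero => simp [signAt_zero_pos _ hn1]
      | succ i =>
        have hi : r n < (1/2:ℝ)^i := hn2.trans_le
          (pow_le_pow_of_le_one (by norm_num) (by norm_num) (le_trans (Nat.le_succ i) hj))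
        simp [signAt_succ_false _ hn1 i hi]
    have hcond : ∃ l0 : ℕ, ∀ m' ≤ (k:Ordinal), ∀ l, l0 ≤ l → ∀ l', l0 ≤ l' →
        signExp (r l) m' = signExp (r l') m' ∧ (signExp (r l) m').isSome := by
      refine ⟨N, fun m' hm' l hl l' hl' => ?_⟩
      obtain ⟨j, rfl⟩ := Ordinal.lt_omega0.mp (lt_of_le_of_lt hm' hγ)
      have hj : j ≤ k := by exact_mod_cast hm'
      rw [key j hj l hl, key j hj l' hl']
      refine ⟨rfl, ?_⟩
      cases j <;> simp
    unfold slim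
    rw [dif_pos hcond]
    obtain ⟨h1, -⟩ := hcond.choose_spec (k:Ordinal) le_rfl hcond.choose le_rfl
      (max hcond.choose N) (le_max_left _ _)
    dsimp only at h1 ⊢
    rw [h1, key k le_rfl _ (le_max_right _ _)]
    cases k with
    | zero => simp [oneOverOmega]
    | succ i =>
      have h0 : ((i+1 : ℕ) : Ordinal) ≠ 0 := Nat.cast_ne_zero.mpr (Nat.succ_ne_zero i)
      simp only [oneOverOmega]
      rw [if_neg h0, if_pos hγ, if_neg (Nat.succ_ne_zero i)]
  · have hnone : ∀ n, signExp (r n) γ = none := fun n => by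
      rw [signExp, dif_neg]
      rintro ⟨m, rfl⟩
      exact hγ (Ordinal.nat_lt_omega0 m)
    unfold slim
    rw [dif_neg]
    · have h0 : γ ≠ 0 := by rintro rfl; exact hγ Ordinal.omega0_pos
      simp [oneOverOmega, h0, hγ]
    · rintro ⟨l0, hl0⟩
      have hi := (hl0 γ le_rfl l0 le_rfl l0 le_rfl).2
      simp only [hnone l0, Option.isSome_none] at hi
      exact Bool.false_ne_true hi
end

section
/- The s-limit of a nondecreasing ordinal-indexed sequence of surreal numbers is greater than or equal to every element of the sequence. -/
open scoped Classical

/-- The stabilization condition used in `slim` for `slimIio`. -/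
def SCond (α : Ordinal) (s : Ordinal → SignStr) (m : Ordinal) (l0 : Set.Iio α) : Prop :=
  ∀ m' ≤ m, ∀ l : Set.Iio α, l0 ≤ l → ∀ l' : Set.Iio α, l0 ≤ l' →
    s l.1 m' = s l'.1 m' ∧ (s l.1 m').isSome

lemma slimIio_eq (α : Ordinal) (s : Ordinal → SignStr) (m : Ordinal) :
    slimIio α s m = if h : ∃ l0, SCond α s m l0 then s h.choose.1 m else none := rfl

lemma signVal_le_two (x : Option Bool) : signVal x ≤ 2 := by
  rcases x with _ | (_ | _) <;> simp [signVal]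

lemma lemA {a b : SignStr} (h : strLE a b) {γ : Ordinal}
    (hlt : ∀ δ < γ, a δ = b δ) (hne : a γ ≠ b γ) :
    signVal (a γ) < signVal (b γ) := by
  rcases h with rfl | ⟨γ', h1, h2⟩
  · exact absurd rfl hne
  · rcases lt_trichotomy γ' γ with hc | rfl | hc
    · rw [hlt γ' hc] at h2; exact absurd h2 (lt_irrefl _)
    · exact h2
    · exact absurd (h1 γ hc) hne

lemma lemB {α : Ordinal} {s : Ordinal → SignStr} {m : Ordinal} {w : Set.Iio α}
    (hw : SCond α s m w) (l : Set.Iio α) (hl : w ≤ l) {m' : Ordinal} (hm' : m' ≤ m) :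
    s l.1 m' = slimIio α s m' ∧ (slimIio α s m').isSome := by
  have hc : ∃ l0, SCond α s m' l0 :=
    ⟨w, fun m'' h'' => hw m'' (h''.trans hm')⟩
  rw [slimIio_eq, dif_pos hc]
  have hcc : SCond α s m' hc.choose := hc.choose_spec
  have h1 : s l.1 m' = s (max l hc.choose).1 m' :=
    (hw m' hm' l hl (max l hc.choose) (le_trans hl (le_max_left _ _))).1
  have h2 : s (max l hc.choose).1 m' = s hc.choose.1 m' :=
    (hcc m' le_rfl (max l hc.choose) (le_max_right _ _) hc.choose le_rfl).1
  have h3 := (hcc m' le_rfl hc.choose le_rfl hc.choose le_rfl).2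
  exact ⟨h1.trans h2, h3⟩

/-- The s-limit of a nondecreasing ordinal-indexed sequence of surreal numbers
(sign expansions) is `≥` every element of the sequence. -/
theorem strLE_slimIio_of_monotone (α : Ordinal) (s : Ordinal → SignStr)
    (hstr : ∀ β < α, IsLowerSet {γ | (s β γ).isSome})
    (hmono : ∀ β γ, β ≤ γ → γ < α → strLE (s β) (s γ)) :
    ∀ β < α, strLE (s β) (slimIio α s) := by
  intro β hβ
  set t := slimIio α s with ht
  by_cases heq : s β = t
  · exact Or.inl heq
  right
  have hne : {δ | s β δ ≠ t δ}.Nonempty := by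
    by_contra h
    push_neg at h
    exact heq (funext fun δ => not_not.1 (Set.eq_empty_iff_forall_notMem.mp h δ))
  set γ := sInf {δ | s β δ ≠ t δ} with hγ
  have hγmem : s β γ ≠ t γ := csInf_mem hne
  have hbelow : ∀ δ < γ, s β δ = t δ := by
    intro δ hδ
    by_contra h
    exact absurd (csInf_le' (show δ ∈ {δ | s β δ ≠ t δ} from h)) (not_le.mpr hδ)
  refine ⟨γ, hbelow, ?_⟩
  by_cases hcond : ∃ l0, SCond α s γ l0
  · -- the limit is defined at γ
    obtain ⟨w, hw⟩ := hcond
    set l : Set.Iio α := max ⟨β, hβ⟩ w with hldef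
    have hβl : β ≤ l.1 := le_max_left _ _
    have hagree : ∀ m' ≤ γ, s l.1 m' = t m' := fun m' hm' =>
      (lemB hw l (le_max_right _ _) hm').1
    have hmle := hmono β l.1 hβl l.2
    have := lemA hmle (γ := γ)
      (fun δ hδ => (hbelow δ hδ).trans (hagree δ hδ.le).symm)
      (fun h => hγmem (h.trans (hagree γ le_rfl)))
    rwa [hagree γ le_rfl] at this
  · -- the limit is none at γ
    have htγ : t γ = none := by rw [ht, slimIio_eq, dif_neg hcond]
    rw [htγ]
    rw [htγ] at hγmem
    -- s β γ is some; rule out `some true`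
    rcases hb : s β γ with _ | b
    · exact absurd hb hγmem
    rcases b with _ | _
    · simp [signVal]
    · -- s β γ = some true : derive a contradiction
      exfalso
      have hsome : ∀ δ ≤ γ, (s β δ).isSome := fun δ hδ =>
        (hstr β hβ) hδ (by simp [hb])
      -- Claim: every s l with l ≥ β agrees with s β up to γ
      have claim : ∀ l : Set.Iio α, β ≤ l.1 → ∀ δ ≤ γ, s l.1 δ = s β δ := by
        intro l hl
        by_contra h
        push_neg at h
        obtain ⟨δ1, hδ1, hd1⟩ := h
        have hne2 : {δ | s β δ ≠ s l.1 δ}.Nonempty := ⟨δ1, fun h => hd1 h.symm⟩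
        have hmem1 : δ1 ∈ {δ | s β δ ≠ s l.1 δ} := fun h => hd1 h.symm
        set δ₀ := sInf {δ | s β δ ≠ s l.1 δ} with hδ₀
        have hd0 : s β δ₀ ≠ s l.1 δ₀ := csInf_mem hne2
        have hd0le : δ₀ ≤ γ := le_trans (csInf_le' hmem1) hδ1
        have hbel0 : ∀ δ < δ₀, s β δ = s l.1 δ := by
          intro δ hδ
          by_contra hq
          exact absurd (csInf_le' (show δ ∈ {δ | s β δ ≠ s l.1 δ} from hq)) (not_le.mpr hδ)
        have hsv : signVal (s β δ₀) < signVal (s l.1 δ₀) :=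
          lemA (hmono β l.1 hl l.2) hbel0 hd0
        have hd0lt : δ₀ < γ := by
          rcases lt_or_eq_of_le hd0le with h | h
          · exact h
          · exfalso
            rw [h, hb] at hsv
            have h2 := signVal_le_two (s l.1 γ)
            have h3 : signVal (some true) = 2 := rfl
            omega
        -- t δ₀ = s β δ₀ is some, so the condition holds at δ₀
        have htδ₀ : t δ₀ = s β δ₀ := (hbelow δ₀ hd0lt).symm
        have hcond0 : ∃ l0, SCond α s δ₀ l0 := by
          by_contra hq
          have : t δ₀ = none := by rw [ht, slimIio_eq, dif_neg hq]
          rw [this] at htδ₀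
          have := hsome δ₀ hd0lt.le
          rw [← htδ₀] at this
          simp at this
        obtain ⟨w₀, hw₀⟩ := hcond0
        set L : Set.Iio α := max l w₀ with hLdef
        have hLagree : ∀ m' ≤ δ₀, s L.1 m' = t m' := fun m' hm' =>
          (lemB hw₀ L (le_max_right _ _) hm').1
        -- s l and s L agree below δ₀ but differ at δ₀, with s L δ₀ = s β δ₀
        have hsv2 : signVal (s l.1 δ₀) < signVal (s L.1 δ₀) := by
          refine lemA (hmono l.1 L.1 (le_max_left _ _) L.2) ?_ ?_
          · intro δ hδ
            rw [hLagree δ hδ.le, ← hbelow δ (hδ.trans hd0lt)]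
            exact (hbel0 δ hδ).symm
          · rw [hLagree δ₀ le_rfl, htδ₀]
            exact fun h => hd0 h.symm
        rw [hLagree δ₀ le_rfl, htδ₀] at hsv2
        exact absurd (hsv.trans hsv2) (lt_irrefl _)
      -- With the claim, the condition at γ holds — contradiction
      refine hcond ⟨⟨β, hβ⟩, fun m' hm' l hl l' hl' => ?_⟩
      have h1 := claim l hl m' hm'
      have h2 := claim l' hl' m' hm'
      exact ⟨h1.trans h2.symm, h1 ▸ hsome m' hm'⟩
end

section
/- If (s_β)_{β<α} and (t_ζ)_{ζ<η} are nondecreasing ordinal-indexed sequences of surreals that are chained (for every β there is ζ with s_β ≤ t_ζ and for every ζ there is β with t_ζ ≤ s_β), then they have the same s-limit. -/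
open scoped Classical

lemma signVal_lt_ne {x y : Option Bool} (h : signVal x < signVal y) : x ≠ y := by
  rintro rfl; exact lt_irrefl _ h

lemma strLT_trans' {a b c : SignStr} (h1 : strLT a b) (h2 : strLT b c) : strLT a c := by
  obtain ⟨γ₁, hp1, hl1⟩ := h1
  obtain ⟨γ₂, hp2, hl2⟩ := h2
  rcases lt_trichotomy γ₁ γ₂ with h | h | h
  · exact ⟨γ₁, fun β hβ => (hp1 β hβ).trans (hp2 β (hβ.trans h)), by
      rw [← hp2 γ₁ h]; exact hl1⟩
  · subst h
    exact ⟨γ₁, fun β hβ => (hp1 β hβ).trans (hp2 β hβ), hl1.trans hl2⟩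
  · exact ⟨γ₂, fun β hβ => (hp1 β (hβ.trans h)).trans (hp2 β hβ), by
      rw [hp1 γ₂ h]; exact hl2⟩

lemma strLE_trans' {a b c : SignStr} (h1 : strLE a b) (h2 : strLE b c) : strLE a c := by
  rcases h1 with rfl | h1
  · exact h2
  rcases h2 with rfl | h2
  · exact Or.inr h1
  · exact Or.inr (strLT_trans' h1 h2)

lemma sandwich_str {a b c : SignStr} {m : Ordinal} (hab : strLE a b) (hbc : strLE b c)
    (hac : ∀ m' ≤ m, a m' = c m') : ∀ m' ≤ m, b m' = a m' := by
  rcases hab with rfl | ⟨γ₁, hp1, hl1⟩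
  · exact fun m' _ => rfl
  intro m' hm'
  rcases le_or_gt γ₁ m with hγ | hγ
  · exfalso
    have hne : a γ₁ ≠ b γ₁ := signVal_lt_ne hl1
    have hac1 : a γ₁ = c γ₁ := hac γ₁ hγ
    rcases hbc with rfl | ⟨γ₂, hp2, hl2⟩
    · exact hne hac1
    rcases lt_trichotomy γ₂ γ₁ with h | h | h
    · exact signVal_lt_ne hl2 ((hp1 γ₂ h).symm.trans (hac γ₂ (h.le.trans hγ)))
    · subst h
      have := hl1.trans hl2
      rw [hac1] at this
      exact lt_irrefl _ this
    · exact hne (hac1.trans (hp2 γ₁ h).symm)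
  · exact (hp1 m' (lt_of_le_of_lt hm' hγ)).symm

lemma key_chained (α η : Ordinal) (s t : Ordinal → SignStr)
    (hsmono : ∀ β γ, β ≤ γ → γ < α → strLE (s β) (s γ))
    (htmono : ∀ ζ ξ, ζ ≤ ξ → ξ < η → strLE (t ζ) (t ξ))
    (hchain₁ : ∀ β < α, ∃ ζ < η, strLE (s β) (t ζ))
    (hchain₂ : ∀ ζ < η, ∃ β < α, strLE (t ζ) (s β))
    (m β0 : Ordinal) (hβ0 : β0 < α)
    (hw : ∀ m' ≤ m, ∀ β, β0 ≤ β → β < α → s β m' = s β0 m') :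
    ∃ ζ0 < η, ∀ ζ, ζ0 ≤ ζ → ζ < η → ∀ m' ≤ m, t ζ m' = s β0 m' := by
  obtain ⟨ζ0, hζ0η, hle⟩ := hchain₁ β0 hβ0
  refine ⟨ζ0, hζ0η, fun ζ hζ0ζ hζη m' hm' => ?_⟩
  have h1 : strLE (s β0) (t ζ) := strLE_trans' hle (htmono ζ0 ζ hζ0ζ hζη)
  obtain ⟨β, hβα, h2⟩ := hchain₂ ζ hζη
  have hβ'' : max β β0 < α := max_lt hβα hβ0
  have h3 : strLE (t ζ) (s (max β β0)) :=
    strLE_trans' h2 (hsmono β _ (le_max_left _ _) hβ'')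
  have hac : ∀ m'' ≤ m, s β0 m'' = s (max β β0) m'' :=
    fun m'' h => (hw m'' h _ (le_max_right _ _) hβ'').symm
  exact sandwich_str h1 h3 hac m' hm'

lemma cond_imp_chained (α η : Ordinal) (s t : Ordinal → SignStr)
    (hsmono : ∀ β γ, β ≤ γ → γ < α → strLE (s β) (s γ))
    (htmono : ∀ ζ ξ, ζ ≤ ξ → ξ < η → strLE (t ζ) (t ξ))
    (hchain₁ : ∀ β < α, ∃ ζ < η, strLE (s β) (t ζ))
    (hchain₂ : ∀ ζ < η, ∃ β < α, strLE (t ζ) (s β))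
    (m : Ordinal)
    (Hs : ∃ l0 : Set.Iio α, ∀ m' ≤ m, ∀ l, l0 ≤ l → ∀ l', l0 ≤ l' →
        s l.1 m' = s l'.1 m' ∧ (s l.1 m').isSome) :
    ∃ l0 : Set.Iio η, ∀ l : Set.Iio η, l0 ≤ l → ∀ m' ≤ m, t l.1 m' = s Hs.choose.1 m' := by
  obtain ⟨ζ0, hζ0η, h⟩ := key_chained α η s t hsmono htmono hchain₁ hchain₂ m
    Hs.choose.1 Hs.choose.2
    (fun m' hm' β hβ0β hβα => (Hs.choose_spec m' hm' ⟨β, hβα⟩ hβ0β Hs.choose le_rfl).1)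
  exact ⟨⟨ζ0, hζ0η⟩, fun l hl m' hm' => h l.1 hl l.2 m' hm'⟩

lemma cond_imp_chained' (α η : Ordinal) (s t : Ordinal → SignStr)
    (hsmono : ∀ β γ, β ≤ γ → γ < α → strLE (s β) (s γ))
    (htmono : ∀ ζ ξ, ζ ≤ ξ → ξ < η → strLE (t ζ) (t ξ))
    (hchain₁ : ∀ β < α, ∃ ζ < η, strLE (s β) (t ζ))
    (hchain₂ : ∀ ζ < η, ∃ β < α, strLE (t ζ) (s β))
    (m : Ordinal)
    (Hs : ∃ l0 : Set.Iio α, ∀ m' ≤ m, ∀ l, l0 ≤ l → ∀ l', l0 ≤ l' →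
        s l.1 m' = s l'.1 m' ∧ (s l.1 m').isSome) :
    ∃ l0 : Set.Iio η, ∀ m' ≤ m, ∀ l, l0 ≤ l → ∀ l', l0 ≤ l' →
        t l.1 m' = t l'.1 m' ∧ (t l.1 m').isSome := by
  obtain ⟨ζ0, hζ0⟩ := cond_imp_chained α η s t hsmono htmono hchain₁ hchain₂ m Hs
  refine ⟨ζ0, fun m' hm' l hl l' hl' =>
    ⟨(hζ0 l hl m' hm').trans (hζ0 l' hl' m' hm').symm, ?_⟩⟩
  rw [hζ0 l hl m' hm']
  exact (Hs.choose_spec m' hm' Hs.choose le_rfl Hs.choose le_rfl).2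

/-- If `(s β)_{β<α}` and `(t ζ)_{ζ<η}` are nondecreasing ordinal-indexed sequences
of surreals that are chained (each element of either sequence is `≤` some element of the other),
then they have the same s-limit. -/
theorem slimIio_eq_of_chained (α η : Ordinal) (s t : Ordinal → SignStr)
    (hsstr : ∀ β < α, IsLowerSet {γ | (s β γ).isSome})
    (htstr : ∀ ζ < η, IsLowerSet {γ | (t ζ γ).isSome})
    (hsmono : ∀ β γ, β ≤ γ → γ < α → strLE (s β) (s γ))
    (htmono : ∀ ζ ξ, ζ ≤ ξ → ξ < η → strLE (t ζ) (t ξ))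
    (hchain₁ : ∀ β < α, ∃ ζ < η, strLE (s β) (t ζ))
    (hchain₂ : ∀ ζ < η, ∃ β < α, strLE (t ζ) (s β)) :
    slimIio α s = slimIio η t := by
  funext m
  simp only [slimIio, slim]
  by_cases Hs : ∃ l0 : Set.Iio α, ∀ m' ≤ m, ∀ l, l0 ≤ l → ∀ l', l0 ≤ l' →
      s l.1 m' = s l'.1 m' ∧ (s l.1 m').isSome
  · obtain ⟨ζ0, hζ0⟩ := cond_imp_chained α η s t hsmono htmono hchain₁ hchain₂ m Hs
    have Ht : ∃ l0 : Set.Iio η, ∀ m' ≤ m, ∀ l, l0 ≤ l → ∀ l', l0 ≤ l' →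
        t l.1 m' = t l'.1 m' ∧ (t l.1 m').isSome :=
      cond_imp_chained' α η s t hsmono htmono hchain₁ hchain₂ m Hs
    rw [dif_pos Hs, dif_pos Ht]
    have hmax : max Ht.choose.1 ζ0.1 < η := max_lt Ht.choose.2 ζ0.2
    have h1 := (Ht.choose_spec m le_rfl Ht.choose le_rfl
      (⟨max Ht.choose.1 ζ0.1, hmax⟩ : Set.Iio η) (le_max_left _ _)).1
    have h2 := hζ0 (⟨max Ht.choose.1 ζ0.1, hmax⟩ : Set.Iio η) (le_max_right _ _) m le_rfl
    show s Hs.choose.1 m = t Ht.choose.1 m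
    rw [h1, h2]
  · have Ht : ¬ ∃ l0 : Set.Iio η, ∀ m' ≤ m, ∀ l, l0 ≤ l → ∀ l', l0 ≤ l' →
        t l.1 m' = t l'.1 m' ∧ (t l.1 m').isSome :=
      fun Ht => Hs (cond_imp_chained' η α t s htmono hsmono hchain₂ hchain₁ m Ht)
    rw [dif_neg Hs, dif_neg Ht]
end

section
/- Monotonicity can fail for s-limits: there exist ω-sequences of surreals (a_n) and (b_n) with a_n < b_n for every n < ω, but slim a_n > slim b_n. (Witness: a_n = n and b_n = ω − 1.) -/
open scoped Classical

noncomputable def omSub1 : SignStr := fun γ =>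
  if γ < Ordinal.omega0 then some true else if γ = Ordinal.omega0 then some false else none

lemma slim_a_lt (m : Ordinal) (hm : m < Ordinal.omega0) :
    slim (fun n : ℕ => ordStr (n : Ordinal)) m = some true := by
  obtain ⟨k, rfl⟩ := Ordinal.lt_omega0.1 hm
  unfold slim
  split
  · rename_i h
    have hs := h.choose_spec
    set c := h.choose with hc
    have h2 := hs (k : Ordinal) le_rfl c le_rfl (max c (k+1)) (le_max_left _ _)
    have hk : k < max c (k+1) := Nat.lt_of_lt_of_le (Nat.lt_succ_self k) (le_max_right _ _)
    show ordStr (c : Ordinal) (k : Ordinal) = some true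
    refine h2.1.trans ?_
    show (if _ then some true else none) = some true
    rw [if_pos]
    exact_mod_cast hk
  · rename_i h
    exfalso
    apply h
    refine ⟨k+1, fun m' hm' l hl l' hl' => ?_⟩
    have h1 : m' < (l : Ordinal) := lt_of_le_of_lt hm'
      (by exact_mod_cast Nat.lt_of_lt_of_le (Nat.lt_succ_self k) hl)
    have h2 : m' < (l' : Ordinal) := lt_of_le_of_lt hm'
      (by exact_mod_cast Nat.lt_of_lt_of_le (Nat.lt_succ_self k) hl')
    simp [ordStr, h1, h2]

lemma slim_a_omega :
    slim (fun n : ℕ => ordStr (n : Ordinal)) Ordinal.omega0 = none := by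
  unfold slim
  split
  · rename_i h
    exfalso
    have hs := (h.choose_spec Ordinal.omega0 le_rfl h.choose le_rfl h.choose le_rfl).2
    simp only [ordStr] at hs
    have key : ∀ c : ℕ, (if Ordinal.omega0 < (c : Ordinal) then some true else none : Option Bool).isSome = true → False := fun c hc => by
      rw [if_neg (not_lt.2 (Ordinal.nat_lt_omega0 c).le)] at hc
      simp at hc
    exact key _ hs
  · rfl

lemma slim_b_le (m : Ordinal) (hm : m ≤ Ordinal.omega0) :
    slim (fun _ : ℕ => omSub1) m = omSub1 m := by
  unfold slim
  split
  · rfl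
  · rename_i h
    exfalso
    apply h
    refine ⟨0, fun m' hm' l _ l' _ => ?_⟩
    refine ⟨rfl, ?_⟩
    rcases lt_or_eq_of_le (le_trans hm' hm) with h1 | h1
    · simp [omSub1, h1]
    · simp [omSub1, h1]

/-- Monotonicity can fail for s-limits: there are ω-sequences of surreals
`(a n)`, `(b n)` with `a n < b n` for every `n`, but `slim b < slim a`.
(Witness: `a n = n` and `b n = ω - 1`.) -/
theorem exists_slim_not_monotone :
    ∃ a b : ℕ → SignStr, (∀ n, strLT (a n) (b n)) ∧ strLT (slim b) (slim a) := by
  refine ⟨fun n => ordStr (n : Ordinal), fun _ => omSub1, fun n => ?_, ?_⟩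
  · refine ⟨(n : Ordinal), fun β hβ => ?_, ?_⟩
    · have hβω : β < Ordinal.omega0 := hβ.trans (Ordinal.nat_lt_omega0 n)
      simp [ordStr, omSub1, hβ, hβω]
    · simp [ordStr, omSub1, Ordinal.nat_lt_omega0 n, signVal]
  · refine ⟨Ordinal.omega0, fun β hβ => ?_, ?_⟩
    · rw [slim_b_le β hβ.le, slim_a_lt β hβ]
      simp [omSub1, hβ]
    · rw [slim_b_le _ le_rfl, slim_a_omega]
      simp [omSub1, signVal]
end
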